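/- Let R be a commutative ring, let \(q \in R\), and define in R[X], for integers \(a \ge b \ge 0\), \(\nu(a,b) = \sum_{e=0}^{b} q^{e}X^{e} + \sum_{e=a+1}^{a+b+1} q^{a+b+1-e}X^{e}\), and for integers \(a \ge 0\), \(\omega(a) = \sum_{e=0}^{a} q^{e}X^{e} + \sum_{e=a+1}^{2a} q^{2a-e}X^{e}\). Then for every integer \(a \ge 1\): \(\omega(a) - (q+1)X\,\nu(a-1,a-1) + qX^{2}\,\omega(a-1) = 1 - X\). -/

import Mathlib

open Polynomial

lemma reflect_sum {R : Type*} [CommRing R] (q : R) (lo hi : ℕ) (hlo : 1 ≤ lo) :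
    ∑ e ∈ Finset.Icc lo hi, C (q ^ (hi - e)) * X ^ e
      = ∑ f ∈ Finset.range (hi + 1 - lo), C (q ^ f) * X ^ (hi - f) := by
  refine Finset.sum_nbij' (i := fun e => hi - e) (j := fun f => hi - f) ?_ ?_ ?_ ?_ ?_
  · intro e he
    simp only [Finset.mem_Icc] at he
    simp only [Finset.mem_range]
    omega
  · intro f hf
    simp only [Finset.mem_range] at hf
    simp only [Finset.mem_Icc]
    omega
  · intro e he
    simp only [Finset.mem_Icc] at he
    omega
  · intro f hf
    simp only [Finset.mem_range] at hf
    omega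
  · intro e he
    simp only [Finset.mem_Icc] at he
    congr 2
    omega

lemma geom_aux {R : Type*} [CommRing R] (q : R) (m : ℕ) :
    (1 - C q * X) * ∑ e ∈ Finset.range m, C (q ^ e) * X ^ e
      = 1 - C (q ^ m) * X ^ m := by
  induction m with
  | zero => simp
  | succ m ih =>
    rw [Finset.sum_range_succ, mul_add, ih, pow_succ, pow_succ, map_mul]
    ring

/-- Case 2, sub-case (e) of the proof of the fourth local density formula of Theorem 6.2:
the Kitaoka-style induction identity for `ω(a)` with `a ≥ 1`. -/
theorem omega_recursion {R : Type*} [CommRing R] (q : R)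
    (ν : ℕ → ℕ → R[X]) (ω : ℕ → R[X])
    (hν : ∀ a b : ℕ, b ≤ a →
      ν a b = (∑ e ∈ Finset.range (b + 1), C (q ^ e) * X ^ e)
        + ∑ e ∈ Finset.Icc (a + 1) (a + b + 1), C (q ^ (a + b + 1 - e)) * X ^ e)
    (hω : ∀ a : ℕ,
      ω a = (∑ e ∈ Finset.range (a + 1), C (q ^ e) * X ^ e)
        + ∑ e ∈ Finset.Icc (a + 1) (2 * a), C (q ^ (2 * a - e)) * X ^ e)
    (a : ℕ) (ha : 1 ≤ a) :
    ω a - (C q + 1) * X * ν (a - 1) (a - 1) + C q * X ^ 2 * ω (a - 1) = 1 - X := by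
  obtain ⟨n, rfl⟩ : ∃ n, a = n + 1 := ⟨a - 1, by omega⟩
  simp only [Nat.add_sub_cancel]
  rw [hω (n + 1), hν n n le_rfl, hω n,
    reflect_sum q (n + 1 + 1) (2 * (n + 1)) (by omega),
    reflect_sum q (n + 1) (n + n + 1) (by omega),
    reflect_sum q (n + 1) (2 * n) (by omega),
    show 2 * (n + 1) + 1 - (n + 1 + 1) = n + 1 by omega,
    show n + n + 1 + 1 - (n + 1) = n + 1 by omega,
    show 2 * n + 1 - (n + 1) = n by omega,
    Finset.sum_range_succ _ (n + 1)]
  have h1 : X * ∑ f ∈ Finset.range (n + 1), C (q ^ f) * X ^ (n + n + 1 - f)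
      = ∑ f ∈ Finset.range (n + 1), C (q ^ f) * X ^ (2 * (n + 1) - f) := by
    rw [Finset.mul_sum]
    refine Finset.sum_congr rfl fun f hf => ?_
    simp only [Finset.mem_range] at hf
    rw [show 2 * (n + 1) - f = (n + n + 1 - f) + 1 by omega, pow_succ]
    ring
  have h2 : X ^ 2 * ∑ f ∈ Finset.range n, C (q ^ f) * X ^ (2 * n - f)
        + C (q ^ n) * (X ^ (n + 1) * X)
      = ∑ f ∈ Finset.range (n + 1), C (q ^ f) * X ^ (2 * (n + 1) - f) := by
    rw [Finset.sum_range_succ, Finset.mul_sum,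
      show 2 * (n + 1) - n = n + 1 + 1 by omega, pow_succ]
    congr 1
    refine Finset.sum_congr rfl fun f hf => ?_
    simp only [Finset.mem_range] at hf
    rw [show 2 * (n + 1) - f = (2 * n - f) + 2 by omega, pow_add]
    ring
  have geom := geom_aux q (n + 1)
  rw [pow_succ q n, map_mul, pow_succ X n] at geom ⊢
  linear_combination (1 - X) * geom - (1 + C q) * h1 + C q * h2
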